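/- (From Lemma A.2: degree reduction annihilates high modes.) Let d ≥ 1, N ≥ 1 and 1 ≤ i ≤ N. Suppose p : ℝ^d → ℝ is a polynomial function satisfying ∫_{T_d} p(x) q(x) dx = 0 for every polynomial q of total degree at most N−i, and suppose c is a vector indexed by multi-indices of weight N such that p(x) = Σ_{|α|=N} c_α b^N_α(x) for all x ∈ ℝ^d. Then (E^N_{N−i})ᵀ c = 0, i.e., Σ_{|α|=N} (E^N_{N−i})_{α,β} c_α = 0 for every multi-index β of weight N−i. -/

import Mathlib

open MeasureTheory

/-- The unit `n`-simplex `T_n = {x ∈ ℝ^n : x_i ≥ 0, Σ x_i ≤ 1}`. -/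
def unitSimplex (n : ℕ) : Set (Fin n → ℝ) := {x | (∀ i, 0 ≤ x i) ∧ ∑ i, x i ≤ 1}

/-- Barycentric coordinates `λ(x) = (x_1, …, x_n, 1 − Σ_i x_i)` of `x ∈ ℝ^n`. -/
noncomputable def bary (n : ℕ) (x : Fin n → ℝ) : Fin (n + 1) → ℝ :=
  Fin.snoc x (1 - ∑ i, x i)

/-- The Bernstein basis function `b^N_α(x) = (N!/∏_j α_j!) · ∏_j λ(x)_j^{α_j}` on `ℝ^n`,
for a multi-index `α : Fin (n+1) → ℕ`. -/
noncomputable def bernFn (n N : ℕ) (α : Fin (n + 1) → ℕ) (x : Fin n → ℝ) : ℝ :=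
  ((N.factorial : ℝ) / ∏ j, ((α j).factorial : ℝ)) * ∏ j, bary n x j ^ α j

/-- Entry `(β, α)` of the one-degree elevation matrix `E^m_{m−1}` (real entries) for
multi-indices over `Fin n`: `(α_j + 1)/m` if `β = α + e_j` for some `j`, `0` otherwise. -/
noncomputable def elevEntryR (n m : ℕ) (β α : Fin n → ℕ) : ℝ :=
  ∑ j, if β = α + Pi.single j 1 then ((α j : ℝ) + 1) / (m : ℝ) else 0

/-- Entry `(β, α)` of the composite elevation matrix
`E^N_{N−i} = E^N_{N−1} E^{N−1}_{N−2} ⋯ E^{N−i+1}_{N−i}` (with `E^N_N` the identity),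
for multi-indices over `Fin n` (`β` of weight `N`, `α` of weight `N−i`). -/
noncomputable def elevComp (n N : ℕ) : ℕ → (Fin n → ℕ) → (Fin n → ℕ) → ℝ
  | 0, β, α => if β = α then 1 else 0
  | i + 1, β, α => ∑ γ ∈ Finset.Nat.antidiagonalTuple n (N - i),
      elevComp n N i β γ * elevEntryR n (N - i) γ α


section Aux
open Finset intervalIntegral

lemma beta_nat : ∀ (b a : ℕ), ∫ x in (0:ℝ)..1, x ^ a * (1 - x) ^ b
    = (a.factorial * b.factorial : ℝ) / (a + b + 1).factorial := by
  intro b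
  induction b with
  | zero =>
    intro a
    simp only [pow_zero, mul_one, integral_pow, Nat.factorial_zero, Nat.cast_one,
      one_pow]
    have : ((a + 0 + 1).factorial : ℝ) = ((a:ℝ)+1) * a.factorial := by
      rw [show a + 0 + 1 = a + 1 from rfl, Nat.factorial_succ]; push_cast; ring
    rw [this]
    have ha : (a.factorial : ℝ) ≠ 0 := by positivity
    rw [zero_pow (Nat.succ_ne_zero a)]
    field_simp
    norm_num
  | succ b ih =>
    intro a
    have key := intervalIntegral.integral_mul_deriv_eq_deriv_mul_of_hasDerivAt
      (a := (0:ℝ)) (b := 1)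
      (u := fun x : ℝ => (1 - x) ^ (b + 1)) (v := fun x : ℝ => x ^ (a + 1) / (a + 1))
      (u' := fun x : ℝ => -((b+1) * (1 - x) ^ b)) (v' := fun x : ℝ => x ^ a)
      (by fun_prop) (by fun_prop)
      (fun x _ => by
        have h1 : HasDerivAt (fun x : ℝ => (1 - x)) (-1) x := by
          simpa using (hasDerivAt_id x).const_sub 1
        simpa [mul_comm] using (h1.fun_pow (b+1)))
      (fun x _ => by
        have := (hasDerivAt_pow (a+1) x).div_const ((a:ℝ)+1)
        convert this using 1
        field_simp
        simp only [Nat.add_sub_cancel]; push_cast; ring)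
      (by apply Continuous.intervalIntegrable; fun_prop)
      (by apply Continuous.intervalIntegrable; fun_prop)
    simp only [one_pow, sub_self, zero_pow (Nat.succ_ne_zero b), zero_pow (Nat.succ_ne_zero a),
      zero_mul, mul_zero, zero_div, sub_zero, zero_sub] at key
    have e1 : ∫ x in (0:ℝ)..1, x ^ a * (1 - x) ^ (b+1)
        = ((b:ℝ)+1)/((a:ℝ)+1) * ∫ x in (0:ℝ)..1, x ^ (a+1) * (1 - x) ^ b := by
      rw [show (fun x : ℝ => x ^ a * (1-x)^(b+1)) = fun x : ℝ => (1-x)^(b+1) * x ^ a by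
        funext x; ring] at *
      rw [key, ← intervalIntegral.integral_const_mul, ← intervalIntegral.integral_neg]
      congr 1
      funext x
      field_simp
    rw [e1, ih (a+1)]
    have h2 : ((a:ℝ)+1) ≠ 0 := by positivity
    have hfa : ((a+1).factorial : ℝ) = ((a:ℝ)+1) * a.factorial := by
      rw [Nat.factorial_succ]; push_cast; ring
    have hfb : ((b+1).factorial : ℝ) = ((b:ℝ)+1) * b.factorial := by
      rw [Nat.factorial_succ]; push_cast; ring
    have hidx : a + 1 + b + 1 = a + (b+1) + 1 := by ring
    rw [hidx, hfa, hfb]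
    have hD : ((a + (b+1) + 1).factorial : ℝ) ≠ 0 := by positivity
    field_simp

lemma isClosed_unitSimplex (n : ℕ) : IsClosed (unitSimplex n) := by
  have h1 : IsClosed {x : Fin n → ℝ | ∀ i, 0 ≤ x i} := by
    have : {x : Fin n → ℝ | ∀ i, 0 ≤ x i} = ⋂ i, {x | 0 ≤ x i} := by
      ext x; simp [Set.mem_iInter]
    rw [this]
    exact isClosed_iInter fun i => isClosed_le continuous_const (continuous_apply i)
  have h2 : IsClosed {x : Fin n → ℝ | ∑ i, x i ≤ 1} :=
    isClosed_le (by fun_prop) continuous_const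
  exact h1.inter h2

lemma measurableSet_unitSimplex (n : ℕ) : MeasurableSet (unitSimplex n) :=
  (isClosed_unitSimplex n).measurableSet

lemma isCompact_unitSimplex (n : ℕ) : IsCompact (unitSimplex n) := by
  have hsub : unitSimplex n ⊆ Set.pi Set.univ (fun _ : Fin n => Set.Icc (0:ℝ) 1) := by
    intro x hx
    intro i _
    refine ⟨hx.1 i, ?_⟩
    calc x i ≤ ∑ j, x j := Finset.single_le_sum (fun j _ => hx.1 j) (Finset.mem_univ i)
    _ ≤ 1 := hx.2
  exact (isCompact_univ_pi fun _ => isCompact_Icc).of_isClosed_subset (isClosed_unitSimplex n) hsub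

lemma continuous_bary (n : ℕ) (j : Fin (n+1)) : Continuous fun x => bary n x j := by
  induction j using Fin.lastCases with
  | last =>
    have h : (fun x : Fin n → ℝ => bary n x (Fin.last n)) = fun x => 1 - ∑ i, x i := by
      funext x; simp [bary]
    rw [h]; fun_prop
  | cast k =>
    have h : (fun x : Fin n → ℝ => bary n x k.castSucc) = fun x => x k := by
      funext x; simp [bary]
    rw [h]; exact continuous_apply k

lemma continuous_cons (d : ℕ) :
    Continuous fun z : ℝ × (Fin d → ℝ) => (Fin.cons z.1 z.2 : Fin (d+1) → ℝ) := by
  apply continuous_pi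
  intro j
  induction j using Fin.cases with
  | zero => simpa using continuous_fst
  | succ k => simp only [Fin.cons_succ]; exact (continuous_apply k).comp continuous_snd

/-- Fubini-type slicing for integrals over the unit simplex. -/
lemma slice_integral (d : ℕ) (F : (Fin (d+1) → ℝ) → ℝ) (hF : Continuous F) :
    ∫ x in unitSimplex (d+1), F x
      = ∫ y in unitSimplex d, ∫ t in Set.Icc (0:ℝ) (1 - ∑ k, y k), F (Fin.cons t y) := by
  set e := MeasurableEquiv.piFinSuccAbove (fun _ : Fin (d+1) => ℝ) 0 with he
  have hsymm : ∀ z : ℝ × (Fin d → ℝ), e.symm z = Fin.cons z.1 z.2 := by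
    intro z
    rw [he, MeasurableEquiv.piFinSuccAbove_symm_apply]
    funext j
    induction j using Fin.cases with
    | zero => simp [Fin.insertNthEquiv]
    | succ k =>
      simp only [Fin.insertNthEquiv, Equiv.coe_fn_mk, Fin.cons_succ]
      rw [show (k.succ) = Fin.succAbove 0 k by simp [Fin.succAbove_zero]]
      exact Fin.insertNth_apply_succAbove _ _ _ _
  have MP : MeasurePreserving (⇑e.symm) volume volume :=
    (MeasureTheory.volume_preserving_piFinSuccAbove (fun _ : Fin (d+1) => ℝ) 0).symm e
  have step1 : ∫ x in unitSimplex (d+1), F x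
      = ∫ z in (⇑e.symm) ⁻¹' unitSimplex (d+1), F (e.symm z) :=
    (MP.setIntegral_preimage_emb e.symm.measurableEmbedding F _).symm
  set A : Set (ℝ × (Fin d → ℝ)) :=
    {z | 0 ≤ z.1 ∧ (∀ i, 0 ≤ z.2 i) ∧ z.1 + ∑ k, z.2 k ≤ 1} with hA
  have hpre : (⇑e.symm) ⁻¹' unitSimplex (d+1) = A := by
    ext z
    simp only [Set.mem_preimage, hsymm, unitSimplex, Set.mem_setOf_eq, hA]
    rw [Fin.forall_fin_succ, Fin.sum_univ_succ]
    simp [and_assoc]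
  have hAclosed : IsClosed A := by
    have h1 : IsClosed {z : ℝ × (Fin d → ℝ) | 0 ≤ z.1} :=
      isClosed_le continuous_const continuous_fst
    have h2 : IsClosed {z : ℝ × (Fin d → ℝ) | ∀ i, 0 ≤ z.2 i} := by
      have : {z : ℝ × (Fin d → ℝ) | ∀ i, 0 ≤ z.2 i} = ⋂ i, {z | 0 ≤ z.2 i} := by
        ext z; simp [Set.mem_iInter]
      rw [this]
      exact isClosed_iInter fun i =>
        isClosed_le continuous_const ((continuous_apply i).comp continuous_snd)
    have h3 : IsClosed {z : ℝ × (Fin d → ℝ) | z.1 + ∑ k, z.2 k ≤ 1} :=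
      isClosed_le (by fun_prop) continuous_const
    have : A = {z : ℝ × (Fin d → ℝ) | 0 ≤ z.1} ∩
        ({z | ∀ i, 0 ≤ z.2 i} ∩ {z | z.1 + ∑ k, z.2 k ≤ 1}) := by
      ext z; simp [hA, and_assoc]
    rw [this]
    exact h1.inter (h2.inter h3)
  have hAmeas : MeasurableSet A := hAclosed.measurableSet
  have hAcompact : IsCompact A := by
    have hsub : A ⊆ Set.Icc (0:ℝ) 1 ×ˢ Set.pi Set.univ (fun _ : Fin d => Set.Icc (0:ℝ) 1) := by
      rintro ⟨t, y⟩ ⟨h0, hy, hs⟩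
      have hys : 0 ≤ ∑ k, y k := Finset.sum_nonneg fun k _ => hy k
      constructor
      · exact ⟨h0, by linarith⟩
      · intro i _
        refine ⟨hy i, ?_⟩
        have : y i ≤ ∑ k, y k := Finset.single_le_sum (fun k _ => hy k) (Finset.mem_univ i)
        linarith
    exact (isCompact_Icc.prod (isCompact_univ_pi fun _ => isCompact_Icc)).of_isClosed_subset
      hAclosed hsub
  set G : ℝ × (Fin d → ℝ) → ℝ := fun z => F (Fin.cons z.1 z.2) with hG
  have hGcont : Continuous G := hF.comp (continuous_cons d)
  have hGint : Integrable (A.indicator G) volume :=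
    (hGcont.continuousOn.integrableOn_compact hAcompact).integrable_indicator hAmeas
  have step2 : ∫ z in A, F (e.symm z) = ∫ z, A.indicator G z := by
    rw [MeasureTheory.integral_indicator hAmeas]
    apply setIntegral_congr_fun hAmeas
    intro z _
    show F (e.symm z) = G z
    rw [hsymm z]
  rw [step1, hpre, step2]
  rw [Measure.volume_eq_prod] at hGint ⊢
  rw [MeasureTheory.integral_prod_symm _ hGint]
  -- now reduce inner integral
  have inner_eq : ∀ y : Fin d → ℝ,
      (∫ t, A.indicator G (t, y)) =
        (unitSimplex d).indicator
          (fun y => ∫ t in Set.Icc (0:ℝ) (1 - ∑ k, y k), G (t, y)) y := by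
    intro y
    by_cases hy : y ∈ unitSimplex d
    · rw [Set.indicator_of_mem hy]
      have : ∀ t : ℝ, A.indicator G (t, y) =
          (Set.Icc (0:ℝ) (1 - ∑ k, y k)).indicator (fun t => G (t, y)) t := by
        intro t
        by_cases ht : t ∈ Set.Icc (0:ℝ) (1 - ∑ k, y k)
        · rw [Set.indicator_of_mem ht, Set.indicator_of_mem]
          exact ⟨ht.1, hy.1, by have := ht.2; linarith⟩
        · rw [Set.indicator_of_notMem ht, Set.indicator_of_notMem]
          intro hmem
          exact ht ⟨hmem.1, by have := hmem.2.2; linarith⟩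
      rw [show (fun t => A.indicator G (t, y)) = fun t =>
          (Set.Icc (0:ℝ) (1 - ∑ k, y k)).indicator (fun t => G (t, y)) t from funext this]
      exact MeasureTheory.integral_indicator measurableSet_Icc
    · rw [Set.indicator_of_notMem hy]
      have : ∀ t : ℝ, A.indicator G (t, y) = 0 := by
        intro t
        rw [Set.indicator_of_notMem]
        rintro ⟨h0, hy2, hs⟩
        exact hy ⟨hy2, by linarith⟩
      simp [this]
  rw [show (fun y => ∫ t, A.indicator G (t, y)) = fun y =>
      (unitSimplex d).indicator
        (fun y => ∫ t in Set.Icc (0:ℝ) (1 - ∑ k, y k), G (t, y)) y from funext inner_eq]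
  rw [MeasureTheory.integral_indicator (measurableSet_unitSimplex d)]

lemma beta_scaled (a b : ℕ) {s : ℝ} (hs : 0 ≤ s) :
    ∫ t in Set.Icc (0:ℝ) s, t ^ a * (s - t) ^ b
      = s ^ (a + b + 1) * ((a.factorial * b.factorial : ℝ) / (a + b + 1).factorial) := by
  rcases eq_or_lt_of_le hs with rfl | hs'
  · simp [Set.Icc_self]
  · rw [MeasureTheory.integral_Icc_eq_integral_Ioc,
      ← intervalIntegral.integral_of_le (le_of_lt hs')]
    have subst := intervalIntegral.integral_comp_mul_left
      (a := (0:ℝ)) (b := 1) (c := s) (fun t => t ^ a * (s - t) ^ b) (ne_of_gt hs')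
    rw [mul_zero, mul_one] at subst
    have expand : ∀ x : ℝ, (s * x) ^ a * (s - s * x) ^ b = s ^ (a + b) * (x ^ a * (1 - x) ^ b) := by
      intro x
      have : s - s * x = s * (1 - x) := by ring
      rw [this, mul_pow, mul_pow]
      ring
    rw [show (fun x : ℝ => (fun t => t ^ a * (s - t) ^ b) (s * x))
        = fun x : ℝ => s ^ (a + b) * (x ^ a * (1 - x) ^ b) from funext expand] at subst
    rw [intervalIntegral.integral_const_mul, beta_nat] at subst
    have : ∫ t in (0:ℝ)..s, t ^ a * (s - t) ^ b
        = s * (s ^ (a+b) * ((a.factorial * b.factorial : ℝ) / (a + b + 1).factorial)) := by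
      rw [subst, smul_eq_mul, ← mul_assoc, mul_inv_cancel₀ (ne_of_gt hs'), one_mul]
    rw [this, pow_succ]
    ring

lemma bary_castSucc (n : ℕ) (x : Fin n → ℝ) (k : Fin n) :
    bary n x k.castSucc = x k := by simp [bary]

lemma bary_last (n : ℕ) (x : Fin n → ℝ) :
    bary n x (Fin.last n) = 1 - ∑ i, x i := by simp [bary]

lemma dirichlet : ∀ (d : ℕ) (γ : Fin (d+1) → ℕ),
    ∫ x in unitSimplex d, ∏ j, bary d x j ^ γ j
      = (∏ j, ((γ j).factorial : ℝ)) / ((∑ j, γ j) + d).factorial := by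
  intro d
  induction d with
  | zero =>
    intro γ
    have hset : unitSimplex 0 = Set.univ := by
      ext x; simp [unitSimplex]
    have hint : ∀ x : Fin 0 → ℝ, ∏ j, bary 0 x j ^ γ j = 1 := by
      intro x
      apply Finset.prod_eq_one
      intro j _
      have hj : j = Fin.last 0 := Fin.ext (by omega)
      rw [hj, bary_last]
      simp
    rw [hset]
    rw [show (fun x : Fin 0 → ℝ => ∏ j, bary 0 x j ^ γ j) = fun _ => (1:ℝ) from funext hint]
    rw [MeasureTheory.setIntegral_const]
    have hvol : (volume : Measure (Fin 0 → ℝ)) Set.univ = 1 := by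
      rw [MeasureTheory.volume_pi, Measure.pi_univ]
      simp
    rw [measureReal_def, hvol]
    have h1 : ∑ j, γ j = γ 0 := by simp [Fin.sum_univ_one]
    have h2 : ∏ j, ((γ j).factorial : ℝ) = ((γ 0).factorial : ℝ) := by simp [Fin.prod_univ_one]
    rw [h1, h2]
    simp [div_self, Nat.cast_ne_zero, Nat.factorial_ne_zero]
  | succ d ih =>
    intro γ
    set a := γ 0 with ha
    set b := γ (Fin.last (d+1)) with hb
    set cmid : Fin d → ℕ := fun k => γ (k.succ.castSucc) with hcmid
    set K : ℝ := (a.factorial * b.factorial : ℝ) / (a + b + 1).factorial with hK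
    have hFcont : Continuous fun x : Fin (d+1) → ℝ => ∏ j, bary (d+1) x j ^ γ j := by
      apply continuous_finset_prod
      intro j _
      exact (continuous_bary (d+1) j).pow (γ j)
    rw [slice_integral d _ hFcont]
    -- pointwise structure of the integrand
    have hpoint : ∀ (t : ℝ) (y : Fin d → ℝ),
        ∏ j, bary (d+1) (Fin.cons t y) j ^ γ j
          = (∏ k, y k ^ cmid k) * (t ^ a * ((1 - ∑ k, y k) - t) ^ b) := by
      intro t y
      rw [Fin.prod_univ_castSucc]
      have h1 : ∀ j : Fin (d+1), bary (d+1) (Fin.cons t y) j.castSucc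
          = (Fin.cons t y : Fin (d+1) → ℝ) j := fun j => bary_castSucc _ _ j
      have h2 : bary (d+1) (Fin.cons t y) (Fin.last (d+1))
          = 1 - (t + ∑ k, y k) := by
        rw [bary_last]
        congr 1
        rw [Fin.sum_univ_succ]
        simp
      rw [h2]
      have h3 : ∏ j : Fin (d+1), bary (d+1) (Fin.cons t y) j.castSucc ^ γ j.castSucc
          = t ^ a * ∏ k : Fin d, y k ^ cmid k := by
        calc ∏ j : Fin (d+1), bary (d+1) (Fin.cons t y) j.castSucc ^ γ j.castSucc
            = ∏ j : Fin (d+1), (Fin.cons t y : Fin (d+1) → ℝ) j ^ γ j.castSucc := by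
              exact Finset.prod_congr rfl fun j _ => by rw [h1]
          _ = t ^ a * ∏ k : Fin d, y k ^ cmid k := by
              rw [Fin.prod_univ_succ]
              simp only [Fin.cons_zero, Fin.cons_succ, Fin.castSucc_zero, hcmid, ← ha]
      rw [h3]
      have : 1 - (t + ∑ k, y k) = (1 - ∑ k, y k) - t := by ring
      rw [this]
      ring
    -- evaluate the inner integral on the simplex
    have hinner : ∀ y ∈ unitSimplex d,
        (∫ t in Set.Icc (0:ℝ) (1 - ∑ k, y k), ∏ j, bary (d+1) (Fin.cons t y) j ^ γ j)
          = K * ((∏ k, y k ^ cmid k) * (1 - ∑ k, y k) ^ (a + b + 1)) := by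
      intro y hy
      have hs : (0:ℝ) ≤ 1 - ∑ k, y k := by
        have := hy.2; linarith
      rw [show (fun t => ∏ j, bary (d+1) (Fin.cons t y) j ^ γ j)
          = fun t => (∏ k, y k ^ cmid k) * (t ^ a * ((1 - ∑ k, y k) - t) ^ b)
          from funext fun t => hpoint t y]
      rw [MeasureTheory.integral_const_mul, beta_scaled a b hs]
      ring
    rw [MeasureTheory.setIntegral_congr_fun (measurableSet_unitSimplex d) hinner]
    -- relate to the d-dimensional Dirichlet integral
    set γ' : Fin (d+1) → ℕ := Fin.snoc cmid (a + b + 1) with hγ'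
    have houter : ∀ y ∈ unitSimplex d,
        K * ((∏ k, y k ^ cmid k) * (1 - ∑ k, y k) ^ (a + b + 1))
          = K * ∏ j, bary d y j ^ γ' j := by
      intro y _
      congr 1
      rw [Fin.prod_univ_castSucc]
      have h1 : ∀ k : Fin d, bary d y k.castSucc ^ γ' k.castSucc = y k ^ cmid k := by
        intro k
        rw [bary_castSucc, hγ']
        simp [Fin.snoc_castSucc]
      rw [Finset.prod_congr rfl fun k _ => h1 k, bary_last, hγ']
      simp [Fin.snoc_last]
    rw [MeasureTheory.setIntegral_congr_fun (measurableSet_unitSimplex d) houter,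
      MeasureTheory.integral_const_mul, ih γ']
    -- final factorial bookkeeping
    have hsum : ∑ j, γ' j = (∑ k, cmid k) + (a + b + 1) := by
      rw [hγ', Fin.sum_univ_castSucc]
      simp [Fin.snoc_castSucc, Fin.snoc_last]
    have hprod : ∏ j, ((γ' j).factorial : ℝ) = (∏ k, ((cmid k).factorial : ℝ)) *
        ((a + b + 1).factorial : ℝ) := by
      rw [hγ', Fin.prod_univ_castSucc]
      simp [Fin.snoc_castSucc, Fin.snoc_last]
    have hsumγ : ∑ j, γ j = a + (∑ k, cmid k) + b := by
      rw [Fin.sum_univ_castSucc, Fin.sum_univ_succ]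
      simp only [Fin.castSucc_zero, hcmid, ← ha, ← hb]
    have hprodγ : ∏ j, ((γ j).factorial : ℝ)
        = (a.factorial : ℝ) * (∏ k, ((cmid k).factorial : ℝ)) * (b.factorial : ℝ) := by
      rw [Fin.prod_univ_castSucc, Fin.prod_univ_succ]
      simp only [Fin.castSucc_zero, hcmid, ← ha, ← hb]
    rw [hsum, hprod, hsumγ, hprodγ, hK]
    have hidx : (∑ k, cmid k) + (a + b + 1) + d = a + (∑ k, cmid k) + b + (d + 1) := by ring
    rw [hidx]
    have hne1 : ((a + b + 1).factorial : ℝ) ≠ 0 := by positivity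
    have hne2 : ((a + (∑ k, cmid k) + b + (d + 1)).factorial : ℝ) ≠ 0 := by positivity
    field_simp

lemma fact_ne (n : ℕ) : ((n.factorial : ℝ)) ≠ 0 := by positivity

lemma alt0 (n : ℕ) : ∑ m ∈ range (n+1), (-1:ℝ)^(n-m) * (n.choose m)
    = if n = 0 then 1 else 0 := by
  have h1 : ∀ m ∈ range (n+1), (-1:ℝ)^(n-m) * (n.choose m)
      = (fun j => (-1:ℝ)^j * (n.choose j)) (n + 1 - 1 - m) := by
    intro m hm
    have hm' : m ≤ n := Nat.lt_succ_iff.mp (mem_range.mp hm)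
    simp only
    rw [show n + 1 - 1 - m = n - m by omega, Nat.choose_symm hm']
  rw [Finset.sum_congr rfl h1,
    Finset.sum_range_reflect (fun j => (-1:ℝ)^j * (n.choose j)) (n+1)]
  have h := @Int.alternating_sum_range_choose n
  have hcast : ((∑ i ∈ range (n+1), (-1:ℤ)^i * (n.choose i) : ℤ) : ℝ)
      = ∑ i ∈ range (n+1), (-1:ℝ)^i * (n.choose i) := by push_cast; rfl
  rw [← hcast, h]
  split <;> simp

lemma choose_mul_choose (b g k : ℕ) (hkg : k ≤ g) (hgb : g ≤ b) :
    ((b.choose g : ℝ)) * (g.choose k) = (b.choose k) * ((b-k).choose (g-k)) := by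
  rw [Nat.cast_choose ℝ hgb, Nat.cast_choose ℝ hkg, Nat.cast_choose ℝ (le_trans hkg hgb),
    Nat.cast_choose ℝ (by omega : g - k ≤ b - k)]
  rw [show b - k - (g - k) = b - g by omega]
  field_simp

lemma alt_inner (b k : ℕ) (hk : k ≤ b) :
    ∑ g ∈ range (b+1), (-1:ℝ)^(b-g) * (b.choose g) * (g.choose k)
      = if k = b then 1 else 0 := by
  have hsplit : range (b+1) = Finset.Ico 0 k ∪ Finset.Ico k (b+1) := by
    rw [Finset.Ico_union_Ico_eq_Ico (by omega) (by omega), Finset.range_eq_Ico]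
  rw [hsplit, Finset.sum_union (by
    apply Finset.Ico_disjoint_Ico_consecutive)]
  have hz : ∑ g ∈ Finset.Ico 0 k, (-1:ℝ)^(b-g) * (b.choose g) * (g.choose k) = 0 := by
    apply Finset.sum_eq_zero
    intro g hg
    have : g < k := (Finset.mem_Ico.mp hg).2
    rw [Nat.choose_eq_zero_of_lt this]
    push_cast; ring
  rw [hz, zero_add, Finset.sum_Ico_eq_sum_range]
  have hterm : ∀ m ∈ range (b + 1 - k), (-1:ℝ)^(b-(k+m)) * (b.choose (k+m)) * ((k+m).choose k)
      = (b.choose k : ℝ) * ((-1:ℝ)^((b-k)-m) * ((b-k).choose m)) := by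
    intro m hm
    have hm' : m ≤ b - k := by have := mem_range.mp hm; omega
    have h := choose_mul_choose b (k+m) k (by omega) (by omega)
    rw [show (k+m) - k = m by omega] at h
    rw [show b - (k+m) = (b-k) - m by omega]
    linear_combination ((-1:ℝ)^((b-k)-m)) * h
  rw [Finset.sum_congr rfl hterm, ← Finset.mul_sum]
  rw [show b + 1 - k = (b - k) + 1 by omega, alt0 (b-k)]
  by_cases hkb : k = b
  · subst hkb; simp
  · rw [if_neg (by omega), if_neg hkb, mul_zero]

/-- the key one-dimensional inversion -/
lemma alt1 (b a : ℕ) :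
    ∑ g ∈ range (b+1), ((-1:ℝ)^(b-g) * (b.choose g)) * ((a+g).choose g)
      = (a.choose b : ℝ) := by
  have hv : ∀ g ∈ range (b+1), ((-1:ℝ)^(b-g) * (b.choose g)) * ((a+g).choose g)
      = ∑ k ∈ range (b+1), (a.choose k : ℝ) *
          ((-1:ℝ)^(b-g) * (b.choose g) * (g.choose k)) := by
    intro g hg
    have hg' : g ≤ b := Nat.lt_succ_iff.mp (mem_range.mp hg)
    have hvand : ((a+g).choose g : ℝ) = ∑ k ∈ range (g+1), (a.choose k : ℝ) * (g.choose k) := by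
      have h := Nat.add_choose_eq a g g
      rw [Finset.Nat.sum_antidiagonal_eq_sum_range_succ_mk] at h
      rw [h]
      push_cast
      apply Finset.sum_congr rfl
      intro k hk
      have hk' : k ≤ g := Nat.lt_succ_iff.mp (mem_range.mp hk)
      rw [Nat.choose_symm hk']
    have hext : ∑ k ∈ range (g+1), (a.choose k : ℝ) * (g.choose k)
        = ∑ k ∈ range (b+1), (a.choose k : ℝ) * (g.choose k) := by
      apply Finset.sum_subset
      · exact Finset.range_subset_range.mpr (by omega)
      · intro k _ hk
        have : g < k := by
          have := Finset.mem_range.not.mp hk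
          omega
        rw [Nat.choose_eq_zero_of_lt this]
        push_cast; ring
    rw [hvand, hext, Finset.mul_sum]
    apply Finset.sum_congr rfl
    intro k _
    ring
  rw [Finset.sum_congr rfl hv, Finset.sum_comm]
  have hinner : ∀ k ∈ range (b+1),
      ∑ g ∈ range (b+1), (a.choose k : ℝ) * ((-1:ℝ)^(b-g) * (b.choose g) * (g.choose k))
        = (a.choose k : ℝ) * (if k = b then 1 else 0) := by
    intro k hk
    rw [← Finset.mul_sum, alt_inner b k (Nat.lt_succ_iff.mp (mem_range.mp hk))]
  rw [Finset.sum_congr rfl hinner]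
  simp only [mul_ite, mul_one, mul_zero]
  rw [Finset.sum_ite_eq' (range (b+1)) b (fun k => (a.choose k : ℝ))]
  rw [if_pos (Finset.self_mem_range_succ b)]

lemma choose_step (A B : ℕ) : ((B:ℝ)+1) * (A.choose (B+1)) = ((A:ℝ) - B) * A.choose B := by
  rcases le_or_gt B A with h | h
  · have h2 := Nat.choose_succ_right_eq A B
    have : ((A.choose (B+1) * (B+1) : ℕ) : ℝ) = ((A.choose B * (A - B) : ℕ) : ℝ) := by
      rw [h2]
    push_cast [Nat.cast_sub h] at this
    linarith
  · rw [Nat.choose_eq_zero_of_lt h, Nat.choose_eq_zero_of_lt (by omega)]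
    push_cast; ring

lemma sum_single_one {n : ℕ} (j : Fin n) : ∑ k, (Pi.single j 1 : Fin n → ℕ) k = 1 := by
  rw [Finset.sum_pi_single']
  simp

lemma elevComp_eq (n N : ℕ) : ∀ (i : ℕ), i ≤ N → ∀ (α β : Fin n → ℕ),
    (∑ j, α j) = N → (∑ j, β j) = N - i →
    elevComp n N i α β
      = (∏ j, ((α j).choose (β j) : ℝ)) * (N - i).factorial * i.factorial / N.factorial := by
  intro i
  induction i with
  | zero =>
    intro _ α β hα hβ
    simp only [Nat.sub_zero] at hβ
    rw [elevComp]
    by_cases h : α = β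
    · subst h
      rw [if_pos rfl]
      have h1 : ∏ j, ((α j).choose (α j) : ℝ) = 1 := by
        apply Finset.prod_eq_one; intro j _; rw [Nat.choose_self]; norm_num
      rw [h1, Nat.sub_zero, Nat.factorial_zero]
      rw [one_mul, Nat.cast_one, mul_one, div_self (by positivity)]
    · rw [if_neg h]
      have : ∃ j, α j < β j := by
        by_contra hcon
        push_neg at hcon
        apply h
        funext j
        by_contra hne
        have hlt : α j > β j ∨ α j < β j := by omega
        rcases hlt with hlt | hlt
        · -- strict inequality at j with β ≤ α everywhere gives sum α > sum β
          have hsum : ∑ k, β k < ∑ k, α k := by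
            apply Finset.sum_lt_sum (fun k _ => hcon k) ⟨j, Finset.mem_univ j, hlt⟩
          omega
        · exact absurd hlt (not_lt.mpr (hcon j))
      obtain ⟨j, hj⟩ := this
      rw [Finset.prod_eq_zero (Finset.mem_univ j) (by
        rw [Nat.choose_eq_zero_of_lt hj]; norm_num)]
      ring
  | succ i ih =>
    intro hi1 α β hα hβ
    have hiN : i ≤ N := by omega
    obtain ⟨m, hm⟩ : ∃ m, N - i = m + 1 := ⟨N - (i+1), by omega⟩
    have hβm : ∑ j, β j = m := by omega
    rw [elevComp, hm]
    have hterm : ∀ γ ∈ Finset.Nat.antidiagonalTuple n (m+1),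
        elevComp n N i α γ * elevEntryR n (m+1) γ β
          = ∑ j, (if γ = β + Pi.single j 1 then
              elevComp n N i α γ * (((β j : ℝ) + 1) / ((m:ℝ)+1)) else 0) := by
      intro γ _
      rw [elevEntryR, Finset.mul_sum]
      apply Finset.sum_congr rfl
      intro j _
      rw [mul_ite, mul_zero]
      congr 1
      push_cast
      ring
    rw [Finset.sum_congr rfl hterm, Finset.sum_comm]
    have hmem : ∀ j : Fin n, (β + Pi.single j 1) ∈ Finset.Nat.antidiagonalTuple n (m+1) := by
      intro j
      rw [Finset.Nat.mem_antidiagonalTuple]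
      simp only [Pi.add_apply]
      rw [Finset.sum_add_distrib, hβm, sum_single_one]
    have hj : ∀ j : Fin n,
        (∑ γ ∈ Finset.Nat.antidiagonalTuple n (m+1),
          if γ = β + Pi.single j 1 then
            elevComp n N i α γ * (((β j : ℝ) + 1) / ((m:ℝ)+1)) else 0)
        = elevComp n N i α (β + Pi.single j 1) * (((β j : ℝ) + 1) / ((m:ℝ)+1)) := by
      intro j
      rw [Finset.sum_ite_eq' (Finset.Nat.antidiagonalTuple n (m+1)) (β + Pi.single j 1)
        (fun γ => elevComp n N i α γ * (((β j : ℝ) + 1) / ((m:ℝ)+1)))]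
      rw [if_pos (hmem j)]
    rw [Finset.sum_congr rfl (fun j _ => hj j)]
    -- apply IH
    have hIH : ∀ j : Fin n, elevComp n N i α (β + Pi.single j 1)
        = (∏ k, ((α k).choose ((β + Pi.single j 1 : Fin n → ℕ) k) : ℝ))
            * (N - i).factorial * i.factorial / N.factorial := by
      intro j
      apply ih hiN α _ hα
      simp only [Pi.add_apply]
      rw [Finset.sum_add_distrib, hβm, sum_single_one]
      omega
    -- the per-j product identity
    have hprodj : ∀ j : Fin n,
        ((β j : ℝ) + 1) * ∏ k, ((α k).choose ((β + Pi.single j 1 : Fin n → ℕ) k) : ℝ)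
          = ((α j : ℝ) - (β j : ℝ)) * ∏ k, ((α k).choose (β k) : ℝ) := by
      intro j
      rw [← Finset.mul_prod_erase Finset.univ _ (Finset.mem_univ j),
        ← Finset.mul_prod_erase Finset.univ (fun k => ((α k).choose (β k) : ℝ))
          (Finset.mem_univ j)]
      have hkne : ∀ k ∈ Finset.univ.erase j,
          ((α k).choose ((β + Pi.single j 1 : Fin n → ℕ) k) : ℝ)
            = ((α k).choose (β k) : ℝ) := by
        intro k hk
        have : k ≠ j := Finset.mem_erase.mp hk |>.1
        simp [Pi.single_eq_of_ne this]
      rw [Finset.prod_congr rfl hkne]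
      have hjj : ((β + Pi.single j 1 : Fin n → ℕ) j) = β j + 1 := by simp
      rw [hjj, ← mul_assoc, ← mul_assoc, choose_step (α j) (β j)]
    have hstep : ∀ j : Fin n,
        elevComp n N i α (β + Pi.single j 1) * (((β j : ℝ) + 1) / ((m:ℝ)+1))
          = (((α j : ℝ) - (β j : ℝ)) * ∏ k, ((α k).choose (β k) : ℝ))
              * ((N - i).factorial * i.factorial / N.factorial) / ((m:ℝ)+1) := by
      intro j
      rw [hIH j, ← hprodj j]
      field_simp
    rw [Finset.sum_congr rfl (fun j _ => hstep j)]
    -- sum over j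
    rw [← Finset.sum_div, ← Finset.sum_mul, ← Finset.sum_mul]
    have hsumj : ∑ j, ((α j : ℝ) - (β j : ℝ)) = ((i:ℝ) + 1) := by
      rw [Finset.sum_sub_distrib]
      have h1 : ∑ j, ((α j : ℝ)) = (N : ℝ) := by
        rw [← hα]; push_cast; rfl
      have h2 : ∑ j, ((β j : ℝ)) = ((N - (i+1) : ℕ) : ℝ) := by
        rw [← hβ]; push_cast; rfl
      rw [h1, h2, Nat.cast_sub hi1]
      push_cast; ring
    rw [hsumj]
    -- factorial arithmetic : (N-i)! = (m+1)! = (m+1) * m!, N-(i+1) = m, i+1 fact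
    rw [hm, show N - (i+1) = m by omega]
    rw [Nat.factorial_succ, Nat.factorial_succ]
    have hNf : ((N.factorial : ℝ)) ≠ 0 := by positivity
    have hmf : ((m.factorial : ℝ)) ≠ 0 := by positivity
    have hm1 : ((m:ℝ) + 1) ≠ 0 := by positivity
    push_cast
    field_simp

noncomputable def baryMv (d : ℕ) : Fin (d+1) → MvPolynomial (Fin d) ℝ :=
  Fin.snoc (fun i => MvPolynomial.X i) (1 - ∑ i, MvPolynomial.X i)

lemma eval_baryMv (d : ℕ) (x : Fin d → ℝ) (j : Fin (d+1)) :
    MvPolynomial.eval x (baryMv d j) = bary d x j := by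
  induction j using Fin.lastCases with
  | last =>
    simp only [baryMv, bary, Fin.snoc_last]
    simp [map_sub, map_sum]
  | cast k =>
    simp only [baryMv, bary, Fin.snoc_castSucc]
    simp

lemma deg_baryMv (d : ℕ) (j : Fin (d+1)) : (baryMv d j).totalDegree ≤ 1 := by
  induction j using Fin.lastCases with
  | last =>
    simp only [baryMv, Fin.snoc_last]
    refine le_trans (MvPolynomial.totalDegree_sub _ _) ?_
    apply sup_le
    · simp [MvPolynomial.totalDegree_one]
    · refine le_trans (MvPolynomial.totalDegree_finset_sum _ _) ?_
      apply Finset.sup_le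
      intro i _
      rw [MvPolynomial.totalDegree_X]
  | cast k =>
    simp only [baryMv, Fin.snoc_castSucc]
    rw [MvPolynomial.totalDegree_X]

lemma continuous_mono (d : ℕ) (γ : Fin (d+1) → ℕ) :
    Continuous fun x => ∏ j, bary d x j ^ γ j := by
  apply continuous_finset_prod
  intro j _
  exact (continuous_bary d j).pow (γ j)

lemma continuous_bernFn (d N : ℕ) (α : Fin (d+1) → ℕ) : Continuous (bernFn d N α) :=
  continuous_const.mul (continuous_mono d α)

lemma bern_mono (d N : ℕ) (α γ : Fin (d+1) → ℕ) (hα : ∑ j, α j = N) :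
    ∫ x in unitSimplex d, bernFn d N α x * ∏ j, bary d x j ^ γ j
      = ((N.factorial : ℝ) / ∏ j, ((α j).factorial : ℝ)) *
          ((∏ j, (((α j + γ j).factorial : ℝ))) / (((N + ∑ j, γ j) + d).factorial : ℝ)) := by
  have hpt : ∀ x : Fin d → ℝ, bernFn d N α x * ∏ j, bary d x j ^ γ j
      = ((N.factorial : ℝ) / ∏ j, ((α j).factorial : ℝ)) *
          ∏ j, bary d x j ^ (α j + γ j) := by
    intro x
    rw [bernFn, mul_assoc, ← Finset.prod_mul_distrib]
    congr 1
    apply Finset.prod_congr rfl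
    intro j _
    rw [pow_add]
  rw [show (fun x => bernFn d N α x * ∏ j, bary d x j ^ γ j)
      = fun x => ((N.factorial : ℝ) / ∏ j, ((α j).factorial : ℝ)) *
          ∏ j, bary d x j ^ (α j + γ j) from funext hpt]
  rw [MeasureTheory.integral_const_mul, dirichlet d (fun j => α j + γ j)]
  rw [show ∑ j, (α j + γ j) = N + ∑ j, γ j by rw [Finset.sum_add_distrib, hα]]

lemma prod_fact_ne (n : ℕ) (f : Fin n → ℕ) : (∏ j, ((f j).factorial : ℝ)) ≠ 0 := by
  apply Finset.prod_ne_zero_iff.mpr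
  intro j _
  positivity

/-- key step : orthogonality kills the falling-binomial pairings -/
lemma key_orth (d N i : ℕ)
    (p : (Fin d → ℝ) → ℝ)
    (horth : ∀ q : MvPolynomial (Fin d) ℝ, q.totalDegree ≤ N - i →
      ∫ x in unitSimplex d, p x * MvPolynomial.eval x q = 0)
    (c : (Fin (d + 1) → ℕ) → ℝ)
    (hc : ∀ x, p x = ∑ α ∈ Finset.Nat.antidiagonalTuple (d + 1) N, c α * bernFn d N α x)
    (β : Fin (d + 1) → ℕ) (hβ : (∑ k, β k) = N - i) :
    ∑ α ∈ Finset.Nat.antidiagonalTuple (d + 1) N,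
      c α * ∏ j, ((α j).choose (β j) : ℝ) = 0 := by
  classical
  set A := Finset.Nat.antidiagonalTuple (d + 1) N with hA
  set Γ := Fintype.piFinset (fun j : Fin (d+1) => Finset.range (β j + 1)) with hΓ
  set C : (Fin (d+1) → ℕ) → ℝ := fun γ =>
    (((N + ∑ j, γ j + d).factorial : ℝ) / ((N.factorial : ℝ) * ∏ j, ((γ j).factorial : ℝ)))
      * ∏ j, ((-1:ℝ)^(β j - γ j) * ((β j).choose (γ j) : ℝ)) with hC
  set q : MvPolynomial (Fin d) ℝ :=
    ∑ γ ∈ Γ, MvPolynomial.C (C γ) * ∏ j, (baryMv d j) ^ (γ j) with hq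
  have hdeg : q.totalDegree ≤ N - i := by
    rw [hq]
    refine le_trans (MvPolynomial.totalDegree_finset_sum _ _) ?_
    apply Finset.sup_le
    intro γ hγ
    refine le_trans (MvPolynomial.totalDegree_mul _ _) ?_
    rw [MvPolynomial.totalDegree_C, zero_add]
    refine le_trans (MvPolynomial.totalDegree_finset_prod _ _) ?_
    refine le_trans (Finset.sum_le_sum (g := fun j => γ j) (fun j _ => ?_)) ?_
    · exact le_trans (MvPolynomial.totalDegree_pow _ _)
        (by simpa using Nat.mul_le_mul_left (γ j) (deg_baryMv d j))
    · rw [← hβ]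
      apply Finset.sum_le_sum
      intro j _
      have := (Fintype.mem_piFinset.mp hγ) j
      have := Finset.mem_range.mp this
      omega
  have heval : ∀ x, MvPolynomial.eval x q = ∑ γ ∈ Γ, C γ * ∏ j, bary d x j ^ γ j := by
    intro x
    rw [hq, map_sum]
    apply Finset.sum_congr rfl
    intro γ _
    rw [map_mul, MvPolynomial.eval_C, map_prod]
    congr 1
    apply Finset.prod_congr rfl
    intro j _
    rw [map_pow, eval_baryMv]
  have H := horth q hdeg
  -- expand the integral
  have hexp : ∀ x, p x * MvPolynomial.eval x q
      = ∑ α ∈ A, ∑ γ ∈ Γ, (c α * C γ) * (bernFn d N α x * ∏ j, bary d x j ^ γ j) := by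
    intro x
    rw [hc x, heval x, Finset.sum_mul_sum]
    apply Finset.sum_congr rfl; intro α _
    apply Finset.sum_congr rfl; intro γ _
    ring
  have hint : ∀ (α γ : Fin (d+1) → ℕ), IntegrableOn
      (fun x => (c α * C γ) * (bernFn d N α x * ∏ j, bary d x j ^ γ j))
      (unitSimplex d) volume := by
    intro α γ
    apply ContinuousOn.integrableOn_compact (isCompact_unitSimplex d)
    apply Continuous.continuousOn
    exact continuous_const.mul ((continuous_bernFn d N α).mul (continuous_mono d γ))
  rw [show (fun x => p x * MvPolynomial.eval x q)
      = fun x => ∑ α ∈ A, ∑ γ ∈ Γ, (c α * C γ) *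
          (bernFn d N α x * ∏ j, bary d x j ^ γ j) from funext hexp] at H
  rw [MeasureTheory.integral_finset_sum A (fun α _ =>
    MeasureTheory.integrable_finset_sum Γ (fun γ _ => hint α γ))] at H
  have H2 : ∀ α ∈ A, (∫ x in unitSimplex d, ∑ γ ∈ Γ, (c α * C γ) *
      (bernFn d N α x * ∏ j, bary d x j ^ γ j))
      = c α * ∏ j, ((α j).choose (β j) : ℝ) := by
    intro α hαA
    have hα : ∑ j, α j = N := Finset.Nat.mem_antidiagonalTuple.mp hαA
    rw [MeasureTheory.integral_finset_sum Γ (fun γ _ => hint α γ)]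
    have hγterm : ∀ γ ∈ Γ, (∫ x in unitSimplex d, (c α * C γ) *
        (bernFn d N α x * ∏ j, bary d x j ^ γ j))
        = c α * ∏ j, (((-1:ℝ)^(β j - γ j) * ((β j).choose (γ j) : ℝ))
            * (((α j + γ j).choose (γ j) : ℝ))) := by
      intro γ _
      rw [MeasureTheory.integral_const_mul, bern_mono d N α γ hα]
      rw [mul_assoc]
      congr 1
      -- C γ * (value) = ∏ ...
      rw [hC]
      have hCh : ∀ j : Fin (d+1), ((α j + γ j).choose (γ j) : ℝ) *
          (((γ j).factorial : ℝ) * ((α j).factorial : ℝ)) = ((α j + γ j).factorial : ℝ) := by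
        intro j
        have h := Nat.choose_mul_factorial_mul_factorial (Nat.le_add_left (γ j) (α j))
        rw [show α j + γ j - γ j = α j by omega] at h
        calc ((α j + γ j).choose (γ j) : ℝ) * (((γ j).factorial : ℝ) * ((α j).factorial : ℝ))
            = (((α j + γ j).choose (γ j) * (γ j).factorial * (α j).factorial : ℕ) : ℝ) := by
              push_cast; ring
          _ = _ := by rw [h]
      have hprodCh : (∏ j, (((α j + γ j).choose (γ j) : ℝ)))
          * ((∏ j, ((γ j).factorial : ℝ)) * (∏ j, ((α j).factorial : ℝ)))
          = ∏ j, ((α j + γ j).factorial : ℝ) := by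
        rw [← Finset.prod_mul_distrib, ← Finset.prod_mul_distrib]
        exact Finset.prod_congr rfl fun j _ => hCh j
      rw [Finset.prod_mul_distrib]
      rw [← hprodCh]
      have h1 : ((N.factorial : ℝ)) ≠ 0 := by positivity
      have h2 : (((N + ∑ j, γ j + d).factorial : ℝ)) ≠ 0 := by positivity
      have h3 := prod_fact_ne (d+1) γ
      have h4 := prod_fact_ne (d+1) α
      field_simp
    rw [Finset.sum_congr rfl hγterm, ← Finset.mul_sum]
    congr 1
    -- ∑ over Γ of the product = ∏ of sums = ∏ choose
    rw [hΓ, ← Finset.prod_univ_sum (fun j => range (β j + 1))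
      (fun j g => ((-1:ℝ)^(β j - g) * (((β j).choose g : ℕ) : ℝ)) * (((α j + g).choose g : ℕ) : ℝ))]
    apply Finset.prod_congr rfl
    intro j _
    exact alt1 (β j) (α j)
  rw [Finset.sum_congr rfl H2] at H
  exact H

end Aux

/-- (From Lemma A.2: degree reduction annihilates high modes.)  Let `d ≥ 1`, `N ≥ 1`,
`1 ≤ i ≤ N`.  If `p : ℝ^d → ℝ` is a polynomial function which is `L²(T_d)`-orthogonal
to every polynomial of total degree at most `N−i`, and `c` is a vector of degree-`N`
Bernstein coefficients for `p`, then `(E^N_{N−i})ᵀ c = 0`. -/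
theorem stmt8 (d N i : ℕ) (hd : 1 ≤ d) (hN : 1 ≤ N) (hi1 : 1 ≤ i) (hi2 : i ≤ N)
    (p : (Fin d → ℝ) → ℝ)
    (hp : ∃ P : MvPolynomial (Fin d) ℝ, ∀ x, MvPolynomial.eval x P = p x)
    (horth : ∀ q : MvPolynomial (Fin d) ℝ, q.totalDegree ≤ N - i →
      ∫ x in unitSimplex d, p x * MvPolynomial.eval x q = 0)
    (c : (Fin (d + 1) → ℕ) → ℝ)
    (hc : ∀ x, p x = ∑ α ∈ Finset.Nat.antidiagonalTuple (d + 1) N, c α * bernFn d N α x) :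
    ∀ β : Fin (d + 1) → ℕ, (∑ k, β k) = N - i →
      ∑ α ∈ Finset.Nat.antidiagonalTuple (d + 1) N, elevComp (d + 1) N i α β * c α = 0 := by
  intro β hβ
  have hkey := key_orth d N i p horth c hc β hβ
  have hterm : ∀ α ∈ Finset.Nat.antidiagonalTuple (d + 1) N,
      elevComp (d + 1) N i α β * c α
        = (((N - i).factorial : ℝ) * (i.factorial : ℝ) / (N.factorial : ℝ)) *
            (c α * ∏ j, ((α j).choose (β j) : ℝ)) := by
    intro α hα
    rw [elevComp_eq (d+1) N i hi2 α β (Finset.Nat.mem_antidiagonalTuple.mp hα) hβ]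
    ring
  rw [Finset.sum_congr rfl hterm, ← Finset.mul_sum, hkey, mul_zero]
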